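/- The Shapley-Shubik index Φ for (j,k) simple games is symmetric: if players i and h are equivalent in v (i.e., v(x) = v(π_{ih} x) for all x ∈ J^n, where π_{ih} swaps coordinates i and h), then Φ_i(v) = Φ_h(v). -/

import Mathlib

open Finset BigOperators

attribute [local instance] Classical.propDecidable

noncomputable section

variable {n j k : ℕ}

/-- The top element `j-1` of `Fin j`. -/
def topF (j : ℕ) [NeZero j] : Fin j :=
  ⟨j - 1, Nat.sub_lt (Nat.pos_of_ne_zero (NeZero.ne j)) one_pos⟩

/-- The profile equal to the constant `c` on `S` and to `x` off `S`. -/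
def mer (S : Finset (Fin n)) (c : Fin j) (x : Fin n → Fin j) : Fin n → Fin j :=
  fun i => if i ∈ S then c else x i

/-- `(j,k)` simple game: `v 0 = 0`, `v (j-1,…,j-1) = k-1`, monotone. -/
def IsJKGame [NeZero j] [NeZero k] (v : (Fin n → Fin j) → Fin k) : Prop :=
  v (fun _ => 0) = 0 ∧ v (fun _ => topF j) = topF k ∧
    ∀ x y : Fin n → Fin j, (∀ i, x i ≤ y i) → v x ≤ v y

/-- The `(j,k)` simple game with point-veto `a`. -/
def uA [NeZero j] [NeZero k] (a : Fin n → Fin j) (x : Fin n → Fin j) : Fin k :=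
  if ∀ i, a i ≤ x i then topF k else 0

/-- The veto game associated with a set `E` of thresholds. -/
def uE [NeZero j] [NeZero k] (E : Set (Fin n → Fin j)) (x : Fin n → Fin j) : Fin k :=
  if ∃ a ∈ E, ∀ i, a i ≤ x i then topF k else 0

/-- Player `i` is a null player of `v`. -/
def NullPlayer [NeZero j] [NeZero k] (v : (Fin n → Fin j) → Fin k) (i : Fin n) : Prop :=
  ∀ (x : Fin n → Fin j) (y : Fin j), v x = v (Function.update x i y)

/-- Players `i` and `h` are equivalent in `v`. -/
def EquivPlayers [NeZero j] [NeZero k] (v : (Fin n → Fin j) → Fin k) (i h : Fin n) : Prop :=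
  ∀ x : Fin n → Fin j, v x = v (x ∘ Equiv.swap i h)

/-- The average game `ṽ(T) = (1/(jⁿ(k-1))) Σ_x [v((j-1)_T, x_{-T}) - v(0_T, x_{-T})]`. -/
def Cfun [NeZero j] [NeZero k] (v : (Fin n → Fin j) → Fin k) (T : Finset (Fin n)) : ℝ :=
  (1 / ((j : ℝ) ^ n * ((k : ℝ) - 1))) *
    ∑ x : Fin n → Fin j,
      (((v (mer T (topF j) x)).val : ℝ) - ((v (mer T 0 x)).val : ℝ))

/-- The Shapley-Shubik index for `(j,k)` simple games. -/
def Phi [NeZero j] [NeZero k] (v : (Fin n → Fin j) → Fin k) (i : Fin n) : ℝ :=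
  ∑ S ∈ univ.filter (fun S : Finset (Fin n) => i ∈ S),
    ((Nat.factorial (S.card - 1) * Nat.factorial (n - S.card) : ℝ) / (Nat.factorial n : ℝ)) *
      (Cfun v S - Cfun v (S.erase i))

/-- The TU game `v_a(S) = (1/(k-1))[v((j-1)_S, a_{-S}) - v(0_S, a_{-S})]`. -/
def vAgame [NeZero j] [NeZero k] (v : (Fin n → Fin j) → Fin k) (a : Fin n → Fin j)
    (S : Finset (Fin n)) : ℝ :=
  (1 / ((k : ℝ) - 1)) * (((v (mer S (topF j) a)).val : ℝ) - ((v (mer S 0 a)).val : ℝ))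

/-- The parametric power index `Φ^a`. -/
def PhiA [NeZero j] [NeZero k] (v : (Fin n → Fin j) → Fin k) (a : Fin n → Fin j) (i : Fin n) : ℝ :=
  ∑ S ∈ univ.filter (fun S : Finset (Fin n) => i ∈ S),
    ((Nat.factorial (S.card - 1) * Nat.factorial (n - S.card) : ℝ) / (Nat.factorial n : ℝ)) *
      (vAgame v a S - vAgame v a (S.erase i))

/-- The game `w^C`: value `k-1` iff all members of `C` give full support. -/
def wCgame [NeZero j] [NeZero k] (C : Finset (Fin n)) : (Fin n → Fin j) → Fin k :=
  uA (fun i => if i ∈ C then topF j else 0)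

/-- The unanimity TU game `γ_S`. -/
def gammaTU (S T : Finset (Fin n)) : ℝ :=
  if S ⊆ T then 1 else 0

end


lemma mer_swap {n j : ℕ} (i h : Fin n) (T : Finset (Fin n)) (c : Fin j)
    (x : Fin n → Fin j) :
    mer (T.image (Equiv.swap i h)) c x ∘ (Equiv.swap i h) = mer T c (x ∘ Equiv.swap i h) := by
  funext y
  simp only [Function.comp, mer]
  have : (Equiv.swap i h) y ∈ T.image (Equiv.swap i h) ↔ y ∈ T := by
    constructor
    · rintro hm
      obtain ⟨a, ha, hay⟩ := Finset.mem_image.mp hm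
      have := (Equiv.swap i h).injective hay
      rwa [← this]
    · intro hy; exact Finset.mem_image_of_mem _ hy
  by_cases hy : y ∈ T <;> simp [this, hy]

lemma Cfun_swap {n j k : ℕ} [NeZero j] [NeZero k] (v : (Fin n → Fin j) → Fin k)
    (i h : Fin n) (heq : EquivPlayers v i h) (T : Finset (Fin n)) :
    Cfun v (T.image (Equiv.swap i h)) = Cfun v T := by
  unfold Cfun
  congr 1
  have key : ∀ (c : Fin j) (x : Fin n → Fin j),
      v (mer (T.image (Equiv.swap i h)) c x) = v (mer T c (x ∘ Equiv.swap i h)) := by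
    intro c x
    rw [heq (mer (T.image (Equiv.swap i h)) c x), mer_swap]
  let e : (Fin n → Fin j) ≃ (Fin n → Fin j) :=
    Equiv.arrowCongr (Equiv.swap i h) (Equiv.refl _)
  refine Fintype.sum_equiv e _ _ ?_
  intro x
  have hex : e x = x ∘ Equiv.swap i h := by
    funext y
    simp [e, Equiv.arrowCongr, Equiv.symm_swap]
  rw [key, key, hex]

theorem stmt8 {n j k : ℕ} [NeZero j] [NeZero k] (hj : 2 ≤ j) (hk : 2 ≤ k)
    (v : (Fin n → Fin j) → Fin k) (hv : IsJKGame v) (i h : Fin n)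
    (heq : EquivPlayers v i h) :
    Phi v i = Phi v h := by
  unfold Phi
  refine Finset.sum_bij' (fun S _ => S.image (Equiv.swap i h))
    (fun S _ => S.image (Equiv.swap i h)) ?_ ?_ ?_ ?_ ?_
  · intro S hS
    simp only [Finset.mem_filter, Finset.mem_univ, true_and] at hS ⊢
    have := Finset.mem_image_of_mem (Equiv.swap i h) hS
    rwa [Equiv.swap_apply_left] at this
  · intro S hS
    simp only [Finset.mem_filter, Finset.mem_univ, true_and] at hS ⊢
    have := Finset.mem_image_of_mem (Equiv.swap i h) hS
    rwa [Equiv.swap_apply_right] at this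
  · intro S _
    rw [Finset.image_image]
    have : (Equiv.swap i h) ∘ (Equiv.swap i h) = id := by
      funext y; simp
    rw [this, Finset.image_id]
  · intro S _
    rw [Finset.image_image]
    have : (Equiv.swap i h) ∘ (Equiv.swap i h) = id := by
      funext y; simp
    rw [this, Finset.image_id]
  · intro S hS
    simp only [Finset.mem_filter, Finset.mem_univ, true_and] at hS
    have hcard : (S.image (Equiv.swap i h)).card = S.card :=
      Finset.card_image_of_injective _ (Equiv.swap i h).injective
    have herase : (S.image (Equiv.swap i h)).erase h = (S.erase i).image (Equiv.swap i h) := by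
      rw [Finset.image_erase (Equiv.swap i h).injective, Equiv.swap_apply_left]
    rw [hcard, herase, Cfun_swap v i h heq, Cfun_swap v i h heq]
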